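/- The function u: ℝ² → ℝ defined by u(x₁,x₂) = min{x₁, 0} + |x₂| is Lipschitz on ℝ² and satisfies |∇u|(0) = |∇⁻u|(0) = 1, yet there is no function ψ: ℝ² → ℝ differentiable at 0 with u − ψ having a local maximum at 0. -/

import Mathlib

open Filter Topology Set

/-- Sub-slope `|∇⁻u|(x)`. -/
noncomputable def subSlope (u : EuclideanSpace ℝ (Fin 2) → ℝ)
    (x : EuclideanSpace ℝ (Fin 2)) : ℝ :=
  Filter.limsup (fun y => max (u x - u y) 0 / dist x y) (𝓝[≠] x)

/-- Local slope `|∇u|(x)`. -/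
noncomputable def localSlope (u : EuclideanSpace ℝ (Fin 2) → ℝ)
    (x : EuclideanSpace ℝ (Fin 2)) : ℝ :=
  Filter.limsup (fun y => |u y - u x| / dist x y) (𝓝[≠] x)

/-- The function `u(x₁,x₂) = min{x₁,0} + |x₂|` on `ℝ²`. -/
noncomputable def uEx (x : EuclideanSpace ℝ (Fin 2)) : ℝ := min (x 0) 0 + |x 1|

lemma abs_coord_le (x : EuclideanSpace ℝ (Fin 2)) (i : Fin 2) : |x i| ≤ ‖x‖ := by
  have h : |x i| = Real.sqrt (|x i| ^ 2) := (Real.sqrt_sq (abs_nonneg _)).symm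
  rw [EuclideanSpace.norm_eq, h]
  apply Real.sqrt_le_sqrt
  rw [Fin.sum_univ_two]
  fin_cases i <;> simp [Real.norm_eq_abs, sq_abs] <;> nlinarith [sq_nonneg (x 0), sq_nonneg (x 1)]

lemma uEx_zero : uEx 0 = 0 := by simp [uEx]

lemma uEx_abs_le (y : EuclideanSpace ℝ (Fin 2)) : |uEx y| ≤ ‖y‖ := by
  have h0 := abs_coord_le y 0
  have h1 := abs_coord_le y 1
  have hmin1 : -|y 0| ≤ min (y 0) 0 := le_min (neg_abs_le _) (neg_nonpos.mpr (abs_nonneg _))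
  have hmin2 : min (y 0) 0 ≤ 0 := min_le_right _ _
  have ha1 := abs_nonneg (y 1)
  rw [uEx, abs_le]
  constructor <;> linarith

lemma uEx_single_one (t : ℝ) : uEx (EuclideanSpace.single 1 t) = |t| := by
  simp [uEx, EuclideanSpace.single_apply]

lemma uEx_single_zero (t : ℝ) (ht : t ≤ 0) : uEx (EuclideanSpace.single 0 t) = t := by
  simp [uEx, EuclideanSpace.single_apply, min_eq_left ht]

lemma min_lip (a b : ℝ) : |min a 0 - min b 0| ≤ |a - b| := by
  have h1 := le_abs_self (a - b)
  have h2 := neg_abs_le (a - b)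
  rcases le_total a 0 with ha | ha <;> rcases le_total b 0 with hb | hb <;>
    rw [abs_le] <;> constructor <;>
    simp [min_eq_left, min_eq_right, ha, hb] <;> linarith

example : True := trivial

lemma uEx_lipschitz : LipschitzWith 2 uEx := by
  apply LipschitzWith.of_dist_le_mul
  intro x y
  rw [Real.dist_eq]
  have h0 : |(x - y) 0| ≤ ‖x - y‖ := abs_coord_le _ 0
  have h1 : |(x - y) 1| ≤ ‖x - y‖ := abs_coord_le _ 1
  have e0 : (x - y) 0 = x 0 - y 0 := rfl
  have e1 : (x - y) 1 = x 1 - y 1 := rfl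
  rw [e0] at h0; rw [e1] at h1
  have hmin := min_lip (x 0) (y 0)
  have habs : abs (|x 1| - |y 1|) ≤ |x 1 - y 1| := abs_abs_sub_abs_le_abs_sub _ _
  have : |uEx x - uEx y| ≤ |x 0 - y 0| + |x 1 - y 1| := by
    rw [uEx, uEx]
    calc |min (x 0) 0 + |x 1| - (min (y 0) 0 + |y 1|)|
        = |(min (x 0) 0 - min (y 0) 0) + (|x 1| - |y 1|)| := by ring_nf
      _ ≤ |min (x 0) 0 - min (y 0) 0| + abs (|x 1| - |y 1|) := abs_add_le _ _
      _ ≤ |x 0 - y 0| + |x 1 - y 1| := add_le_add hmin habs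
  have hd : dist x y = ‖x - y‖ := dist_eq_norm x y
  rw [hd]
  push_cast
  linarith

lemma single_tendsto (i : Fin 2) (v : ℝ) (hv : v ≠ 0) :
    Tendsto (fun n : ℕ => EuclideanSpace.single i (v / (n + 1)))
      atTop (𝓝[≠] (0 : EuclideanSpace ℝ (Fin 2))) := by
  have hnorm : ∀ n : ℕ, ‖EuclideanSpace.single i (v / (n + 1))‖ = |v| / (n + 1) := by
    intro n
    rw [EuclideanSpace.norm_single, Real.norm_eq_abs, abs_div]
    congr 1
    rw [abs_of_pos (by positivity : (0:ℝ) < (n:ℝ) + 1)]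
  have hne : ∀ n : ℕ, EuclideanSpace.single i (v / (n + 1)) ≠ 0 := by
    intro n h
    have := hnorm n
    rw [h, norm_zero] at this
    have : |v| = 0 := by
      field_simp at this
      simpa using this.symm
    exact hv (abs_eq_zero.mp this)
  apply tendsto_nhdsWithin_of_tendsto_nhds_of_eventually_within
  · rw [tendsto_zero_iff_norm_tendsto_zero]
    simp only [hnorm]
    have : Tendsto (fun n : ℕ => |v| * (1 / ((n:ℝ) + 1))) atTop (𝓝 (|v| * 0)) :=
      tendsto_const_nhds.mul tendsto_one_div_add_atTop_nhds_zero_nat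
    simpa [div_eq_mul_inv] using this
  · exact Eventually.of_forall fun n => hne n

lemma localSlope_uEx : localSlope uEx 0 = 1 := by
  set f : EuclideanSpace ℝ (Fin 2) → ℝ := fun y => |uEx y - uEx 0| / dist 0 y with hf
  have hub : ∀ y, f y ≤ 1 := by
    intro y
    rcases eq_or_ne y 0 with rfl | hy
    · simp [hf]
    · have hpos : 0 < dist (0 : EuclideanSpace ℝ (Fin 2)) y := dist_pos.mpr (Ne.symm hy)
      rw [hf, div_le_one hpos, uEx_zero, sub_zero, dist_zero_left]
      exact uEx_abs_le y
  have hnn : ∀ y, 0 ≤ f y := fun y => div_nonneg (abs_nonneg _) dist_nonneg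
  have hfreq : ∃ᶠ y in 𝓝[≠] (0 : EuclideanSpace ℝ (Fin 2)), 1 ≤ f y := by
    apply (single_tendsto 1 1 one_ne_zero).frequently
    apply Frequently.of_forall
    intro n
    have hpos : (0:ℝ) < 1 / ((n:ℝ) + 1) := by positivity
    show 1 ≤ |uEx (EuclideanSpace.single 1 (1 / ((n:ℝ) + 1))) - uEx 0| /
      dist 0 (EuclideanSpace.single 1 (1 / ((n:ℝ) + 1)))
    rw [uEx_zero, sub_zero, uEx_single_one, dist_zero_left, EuclideanSpace.norm_single,
      Real.norm_eq_abs, abs_abs, abs_of_pos hpos, div_self (ne_of_gt hpos)]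
  refine le_antisymm ?_ ?_
  · exact Filter.limsup_le_of_le (Filter.isCoboundedUnder_le_of_le _ hnn)
      (Eventually.of_forall hub)
  · exact Filter.le_limsup_of_frequently_le hfreq (Filter.isBoundedUnder_of ⟨1, hub⟩)

lemma subSlope_uEx : subSlope uEx 0 = 1 := by
  set f : EuclideanSpace ℝ (Fin 2) → ℝ := fun y => max (uEx 0 - uEx y) 0 / dist 0 y with hf
  have hub : ∀ y, f y ≤ 1 := by
    intro y
    rcases eq_or_ne y 0 with rfl | hy
    · simp [hf]
    · have hpos : 0 < dist (0 : EuclideanSpace ℝ (Fin 2)) y := dist_pos.mpr (Ne.symm hy)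
      rw [hf, div_le_one hpos, uEx_zero, zero_sub, dist_zero_left]
      exact max_le ((neg_le_abs _).trans (uEx_abs_le y)) (norm_nonneg y)
  have hnn : ∀ y, 0 ≤ f y := fun y => div_nonneg (le_max_right _ _) dist_nonneg
  have hfreq : ∃ᶠ y in 𝓝[≠] (0 : EuclideanSpace ℝ (Fin 2)), 1 ≤ f y := by
    apply (single_tendsto 0 (-1) (by norm_num)).frequently
    apply Frequently.of_forall
    intro n
    have hpos : (0:ℝ) < 1 / ((n:ℝ) + 1) := by positivity
    have hle : (-1:ℝ) / ((n:ℝ) + 1) ≤ 0 :=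
      div_nonpos_of_nonpos_of_nonneg (by norm_num) (by positivity)
    have h1 : -((-1:ℝ) / ((n:ℝ) + 1)) = 1 / ((n:ℝ) + 1) := by ring
    have h2 : |(-1:ℝ) / ((n:ℝ) + 1)| = 1 / ((n:ℝ) + 1) := by
      rw [abs_div, abs_neg, abs_one, abs_of_pos (show (0:ℝ) < (n:ℝ) + 1 by positivity)]
    show 1 ≤ max (uEx 0 - uEx (EuclideanSpace.single 0 ((-1) / ((n:ℝ) + 1)))) 0 /
      dist 0 (EuclideanSpace.single 0 ((-1) / ((n:ℝ) + 1)))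
    rw [uEx_zero, zero_sub, uEx_single_zero _ hle, dist_zero_left, EuclideanSpace.norm_single,
      Real.norm_eq_abs, h1, h2, max_eq_left hpos.le, div_self (ne_of_gt hpos)]
  refine le_antisymm ?_ ?_
  · exact Filter.limsup_le_of_le (Filter.isCoboundedUnder_le_of_le _ hnn)
      (Eventually.of_forall hub)
  · exact Filter.le_limsup_of_frequently_le hfreq (Filter.isBoundedUnder_of ⟨1, hub⟩)

lemma no_touch : ¬ ∃ ψ : EuclideanSpace ℝ (Fin 2) → ℝ, DifferentiableAt ℝ ψ 0 ∧
    IsLocalMax (fun x => uEx x - ψ x) 0 := by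
  rintro ⟨ψ, hψ, hmax⟩
  set c : EuclideanSpace ℝ (Fin 2) := EuclideanSpace.single 1 1 with hc
  set L : ℝ →L[ℝ] EuclideanSpace ℝ (Fin 2) := ContinuousLinearMap.toSpanSingleton ℝ c with hLdef
  have hL : ∀ t : ℝ, L t = EuclideanSpace.single (1 : Fin 2) t := by
    intro t
    ext j
    simp [hLdef, ContinuousLinearMap.toSpanSingleton_apply, hc, EuclideanSpace.single_apply,
      mul_ite]
  have hL0 : L 0 = 0 := map_zero L
  set a : ℝ := fderiv ℝ ψ 0 (L 1) with ha
  have hg : HasDerivAt (fun t => ψ (L t)) a 0 := by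
    have hψ' : HasFDerivAt ψ (fderiv ℝ ψ 0) (L 0) := by rw [hL0]; exact hψ.hasFDerivAt
    have h1 := hψ'.comp (0 : ℝ) L.hasFDerivAt
    have := h1.hasDerivAt
    exact this
  have hmax0 : IsLocalMax (fun x => uEx x - ψ x) (L 0) := by rwa [hL0]
  have hM : IsLocalMax (fun t : ℝ => uEx (L t) - ψ (L t)) 0 :=
    hmax0.comp_continuous L.continuous.continuousAt
  have hev : ∀ᶠ t : ℝ in 𝓝 0, |t| ≤ ψ (L t) - ψ (L 0) := by
    filter_upwards [hM] with t ht
    have h0 : uEx (L 0) = 0 := by rw [hL0, uEx_zero]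
    have h1 : uEx (L t) = |t| := by rw [hL t, uEx_single_one]
    simp only [h0, h1] at ht
    linarith
  have hslope := hasDerivAt_iff_tendsto_slope.mp hg
  have hright : (1:ℝ) ≤ a := by
    have htend : Tendsto (slope (fun t => ψ (L t)) 0) (𝓝[>] (0:ℝ)) (𝓝 a) :=
      hslope.mono_left (nhdsWithin_mono 0 fun x hx => ne_of_gt hx)
    refine ge_of_tendsto htend ?_
    filter_upwards [hev.filter_mono nhdsWithin_le_nhds, self_mem_nhdsWithin] with t ht ht'
    have htpos : (0:ℝ) < t := ht'
    rw [slope_def_field, sub_zero, le_div_iff₀ htpos, one_mul]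
    have habs : |t| = t := abs_of_pos htpos
    linarith
  have hleft : a ≤ -1 := by
    have htend : Tendsto (slope (fun t => ψ (L t)) 0) (𝓝[<] (0:ℝ)) (𝓝 a) :=
      hslope.mono_left (nhdsWithin_mono 0 fun x hx => ne_of_lt hx)
    refine le_of_tendsto htend ?_
    filter_upwards [hev.filter_mono nhdsWithin_le_nhds, self_mem_nhdsWithin] with t ht ht'
    have htneg : t < 0 := ht'
    rw [slope_def_field, sub_zero, div_le_iff_of_neg htneg]
    have habs : |t| = -t := abs_of_neg htneg
    linarith
  linarith


/-- `u(x₁,x₂) = min{x₁,0} + |x₂|` is Lipschitz on `ℝ²` with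
`|∇u|(0) = |∇⁻u|(0) = 1`, yet no function differentiable at `0` touches `u`
from above at `0`. -/
theorem no_upper_test_example :
    (∃ K : NNReal, LipschitzWith K uEx) ∧
    localSlope uEx 0 = 1 ∧ subSlope uEx 0 = 1 ∧
    ¬ ∃ ψ : EuclideanSpace ℝ (Fin 2) → ℝ, DifferentiableAt ℝ ψ 0 ∧
      IsLocalMax (fun x => uEx x - ψ x) 0 :=
  ⟨⟨2, uEx_lipschitz⟩, localSlope_uEx, subSlope_uEx, no_touch⟩
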